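/- Let n ≥ 1 and let r₁, …, rₙ be positive real numbers with r₁·r₂⋯rₙ < 1. For each i ∈ {1,…,n} let gᵢ : ℝ → ℝ be a function such that gᵢ(x) → 0 as x → 0⁺ and such that for every ε > 0 there exist c > 0 and δ > 0 with gᵢ(x) ≥ c·x^(rᵢ + ε) for all x ∈ (0, δ). Then there exists δ' > 0 such that the composition π = gₙ ∘ ⋯ ∘ g₁ satisfies π(x) > x for all x ∈ (0, δ'). -/

import Mathlib

open Filter Real Set

lemma key_fold (n : ℕ) (s : Fin n → ℝ) (hs : ∀ i, 0 < s i)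
    (g : Fin n → ℝ → ℝ)
    (hg0 : ∀ i, Tendsto (g i) (nhdsWithin 0 (Set.Ioi 0)) (nhds 0))
    (hg : ∀ i, ∃ c > (0:ℝ), ∃ δ > (0:ℝ), ∀ x, 0 < x → x < δ → c * x ^ s i ≤ g i x) :
    ∀ l : List (Fin n),
      Tendsto (fun x => l.foldl (fun y i => g i y) x) (nhdsWithin 0 (Set.Ioi 0)) (nhds 0) ∧
      ∃ c > (0:ℝ), ∃ δ > (0:ℝ), ∀ x, 0 < x → x < δ →
        c * x ^ (l.map s).prod ≤ l.foldl (fun y i => g i y) x := by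
  intro l
  induction l with
  | nil =>
    constructor
    · exact tendsto_id.mono_left nhdsWithin_le_nhds
    · exact ⟨1, one_pos, 1, one_pos, fun x hx _ => by simp [Real.rpow_one]⟩
  | cons i t ih =>
    obtain ⟨ht0, c₂, hc₂, δ₂, hδ₂, hb₂⟩ := ih
    obtain ⟨c₁, hc₁, δ₁, hδ₁, hb₁⟩ := hg i
    -- positivity of the tail exponent
    have hPt : 0 < (t.map s).prod := by
      apply List.prod_pos
      intro a ha
      obtain ⟨j, _, rfl⟩ := List.mem_map.1 ha
      exact hs j
    -- g i maps small positives to positives, tending to 0 within Ioi 0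
    have hx_small : ∀ᶠ x in nhdsWithin (0:ℝ) (Set.Ioi 0), 0 < x ∧ x < δ₁ := by
      filter_upwards [self_mem_nhdsWithin,
        eventually_nhdsWithin_of_eventually_nhds (Filter.Tendsto.eventually_lt_const hδ₁ tendsto_id)]
        with x h1 h2
      exact ⟨h1, h2⟩
    have hgpos : ∀ᶠ x in nhdsWithin (0:ℝ) (Set.Ioi 0), g i x ∈ Set.Ioi (0:ℝ) := by
      filter_upwards [hx_small] with x ⟨h1, h2⟩
      exact lt_of_lt_of_le (by positivity) (hb₁ x h1 h2)
    have hgT : Tendsto (g i) (nhdsWithin 0 (Set.Ioi 0)) (nhdsWithin 0 (Set.Ioi 0)) :=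
      tendsto_nhdsWithin_iff.2 ⟨hg0 i, hgpos⟩
    constructor
    · exact ht0.comp hgT
    · -- get δ₃ so that g i x < δ₂ for x ∈ (0, δ₃)
      have hev : ∀ᶠ x in nhdsWithin (0:ℝ) (Set.Ioi 0), g i x < δ₂ :=
        Filter.Tendsto.eventually_lt_const hδ₂ (hg0 i)
      rw [eventually_nhdsWithin_iff, Metric.eventually_nhds_iff] at hev
      obtain ⟨δ₃, hδ₃, hb₃⟩ := hev
      refine ⟨c₂ * c₁ ^ (t.map s).prod, by positivity, min δ₁ δ₃, by positivity, ?_⟩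
      intro x hx hxδ
      have hx1 : x < δ₁ := lt_of_lt_of_le hxδ (min_le_left _ _)
      have hx3 : x < δ₃ := lt_of_lt_of_le hxδ (min_le_right _ _)
      have hgx_lb : c₁ * x ^ s i ≤ g i x := hb₁ x hx hx1
      have hgx_pos : 0 < g i x := lt_of_lt_of_le (by positivity) hgx_lb
      have hgx_lt : g i x < δ₂ := hb₃ (by simpa [Real.dist_eq, abs_of_pos hx]) hx
      have h2 : c₂ * (g i x) ^ (t.map s).prod ≤ t.foldl (fun y i => g i y) (g i x) :=
        hb₂ (g i x) hgx_pos hgx_lt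
      have h3 : (c₁ * x ^ s i) ^ (t.map s).prod ≤ (g i x) ^ (t.map s).prod :=
        Real.rpow_le_rpow (by positivity) hgx_lb hPt.le
      have h4 : (c₁ * x ^ s i) ^ (t.map s).prod
          = c₁ ^ (t.map s).prod * x ^ (s i * (t.map s).prod) := by
        rw [Real.mul_rpow hc₁.le (by positivity), ← Real.rpow_mul hx.le]
      calc c₂ * c₁ ^ (t.map s).prod * x ^ ((i :: t).map s).prod
          = c₂ * ((c₁ * x ^ s i) ^ (t.map s).prod) := by
            rw [h4]; ring_nf; rw [List.map_cons, List.prod_cons]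
        _ ≤ c₂ * (g i x) ^ (t.map s).prod := by nlinarith [h3, hc₂]
        _ ≤ _ := h2



/-- Let `n ≥ 1` and `r₁, …, rₙ` be positive reals with product `< 1`.
If each `gᵢ : ℝ → ℝ` tends to `0` as `x → 0⁺` and satisfies, for every `ε > 0`,
a lower bound `gᵢ x ≥ c * x ^ (rᵢ + ε)` near `0⁺`, then the composition
`π = gₙ ∘ ⋯ ∘ g₁` satisfies `π x > x` for all small `x > 0`. -/
theorem stmt_1 (n : ℕ) (hn : 1 ≤ n) (r : Fin n → ℝ)
    (hr : ∀ i, 0 < r i) (hprod : ∏ i, r i < 1)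
    (g : Fin n → ℝ → ℝ)
    (hg0 : ∀ i, Filter.Tendsto (g i) (nhdsWithin 0 (Set.Ioi 0)) (nhds 0))
    (hg : ∀ i, ∀ ε : ℝ, 0 < ε →
      ∃ c > (0:ℝ), ∃ δ > (0:ℝ), ∀ x : ℝ, 0 < x → x < δ →
        c * x ^ (r i + ε) ≤ g i x) :
    ∃ δ' > (0:ℝ), ∀ x : ℝ, 0 < x → x < δ' →
      x < (List.finRange n).foldl (fun y i => g i y) x := by
  -- choose ε > 0 with ∏ (r i + ε) < 1
  have hcont : ContinuousAt (fun e : ℝ => ∏ i, (r i + e)) 0 := by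
    apply Continuous.continuousAt
    exact continuous_finset_prod _ (fun i _ => by continuity)
  have hev : ∀ᶠ e in nhds (0:ℝ), ∏ i, (r i + e) < 1 :=
    hcont.eventually_lt continuousAt_const (by simpa using hprod)
  obtain ⟨ε, hε1, hεpos⟩ :=
    ((hev.filter_mono (nhdsWithin_le_nhds (s := Set.Ioi (0:ℝ)))).and eventually_mem_nhdsWithin).exists
  simp only [Set.mem_Ioi] at hεpos
  set s : Fin n → ℝ := fun i => r i + ε with hsdef
  have hs : ∀ i, 0 < s i := fun i => by have := hr i; simp [hsdef]; linarith
  obtain ⟨-, c, hc, δ, hδ, hb⟩ :=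
    key_fold n s hs g hg0 (fun i => hg i ε hεpos) (List.finRange n)
  set p : ℝ := ((List.finRange n).map s).prod with hpdef
  have hp1 : p < 1 := by
    rw [hpdef, ← Fin.prod_univ_def]; exact hε1
  have hq : 0 < 1 - p := by linarith
  refine ⟨min δ (c ^ ((1:ℝ)/(1-p))), by positivity, fun x hx hxδ' => ?_⟩
  have hxδ : x < δ := lt_of_lt_of_le hxδ' (min_le_left _ _)
  have hxc : x < c ^ ((1:ℝ)/(1-p)) := lt_of_lt_of_le hxδ' (min_le_right _ _)
  have h1 : x ^ (1-p) < c := by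
    have h := Real.rpow_lt_rpow hx.le hxc hq
    rwa [← Real.rpow_mul hc.le, one_div_mul_cancel hq.ne', Real.rpow_one] at h
  have hxp : 0 < x ^ p := Real.rpow_pos_of_pos hx p
  calc x = x ^ (1-p) * x ^ p := by
        rw [← Real.rpow_add hx]; norm_num
    _ < c * x ^ p := by nlinarith
    _ ≤ _ := hb x hx hxδ
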